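/- Let ν be a probability measure on a measurable space equipped with a left action of a countable group G, and let μ be a probability measure on G whose support generates G as a semigroup. Suppose ν is μ-stationary, i.e. ν(A) = ∑_{g∈G} μ(g) ν(g^{-1}A) for all measurable A, and suppose every point has an infinite G-orbit with all orbit points measurable. Then ν is non-atomic. -/

import Mathlib

open MeasureTheory

/-- Let `ν` be a probability measure on a space with a left action of a countable group
`G`, and let `μ` be a probability measure on `G` whose support generates `G` as a
semigroup. If `ν` is `μ`-stationary and every point has an infinite `G`-orbit with
measurable orbit points, then `ν` is non-atomic: every singleton is null. -/
theorem stationary_measure_nonatomic {G α : Type*} [Group G] [Countable G]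
    [MeasurableSpace α] [MulAction G α]
    (ν : Measure α) [IsProbabilityMeasure ν]
    (μ : G → ENNReal) (hμ1 : ∑' g, μ g = 1)
    (hgen : Subsemigroup.closure {g : G | 0 < μ g} = ⊤)
    (hstat : ∀ A : Set α, MeasurableSet A →
      ν A = ∑' g : G, μ g * ν ((fun x => g • x) ⁻¹' A))
    (horbit : ∀ x : α, (MulAction.orbit G x).Infinite)
    (hmeas : ∀ (g : G) (x : α), MeasurableSet ({g • x} : Set α)) :
    ∀ x : α, ν {x} = 0 := by
  intro x
  by_contra hb
  -- every singleton is measurable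
  have hm : ∀ y : α, MeasurableSet ({y} : Set α) := by
    intro y; simpa using hmeas 1 y
  set b := ν {x} with hbdef
  have hbpos : 0 < b := pos_iff_ne_zero.mpr hb
  -- any infinite set of points each of mass ≥ b gives a contradiction
  have count : ∀ s : Set α, (∀ y ∈ s, b ≤ ν {y}) → s.Infinite → False := by
    intro s hs hinf
    obtain e := hinf.natEmbedding
    have hdisj : Pairwise (Function.onFun Disjoint fun n : ℕ => ({(e n : α)} : Set α)) := by
      intro m n hmn
      simp only [Function.onFun, Set.disjoint_singleton]
      exact fun h => hmn (e.injective (Subtype.ext h))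
    have hU : ν (⋃ n : ℕ, ({(e n : α)} : Set α)) = ∑' n : ℕ, ν {(e n : α)} :=
      measure_iUnion hdisj fun n => hm _
    have htop : (⊤ : ENNReal) ≤ ∑' n : ℕ, ν {(e n : α)} := by
      calc (⊤ : ENNReal) = ∑' _ : ℕ, b := (ENNReal.tsum_const_eq_top_of_ne_zero hb).symm
        _ ≤ _ := ENNReal.tsum_le_tsum fun n => hs _ (e n).2
    have : (⊤ : ENNReal) ≤ ν (⋃ n : ℕ, ({(e n : α)} : Set α)) := hU ▸ htop
    exact absurd (le_trans this (prob_le_one)) (by simp)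
  -- the set of points of mass ≥ b is finite and nonempty
  have hFfin : {y : α | b ≤ ν {y}}.Finite := by
    by_contra h
    exact count _ (fun y hy => hy) h
  have hFne : {y : α | b ≤ ν {y}}.Nonempty := ⟨x, le_of_eq hbdef⟩
  obtain ⟨p, hpF, hpmax⟩ := Set.exists_max_image _ (fun y => ν {y}) hFfin hFne
  set a := ν {p} with hadef
  have hba : b ≤ a := hpF
  have hapos : 0 < a := lt_of_lt_of_le hbpos hba
  have hane : a ≠ ⊤ := (lt_of_le_of_lt (prob_le_one) (by simp)).ne
  -- a is the maximal mass of any singleton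
  have hmax : ∀ y : α, ν {y} ≤ a := by
    intro y
    by_cases hy : b ≤ ν {y}
    · exact hpmax y hy
    · exact le_trans (le_of_not_ge hy) hba
  -- key step: maximal-mass points propagate along the support of μ
  have key : ∀ q : α, ν {q} = a → ∀ g : G, 0 < μ g → ν {g⁻¹ • q} = a := by
    intro q hq g hg
    by_contra hne
    have hlt : ν {g⁻¹ • q} < a := lt_of_le_of_ne (hmax _) hne
    have hstq := hstat {q} (hm q)
    have hpre : ∀ h : G, (fun x => h • x) ⁻¹' ({q} : Set α) = {h⁻¹ • q} := by
      intro h; ext z; simp [eq_inv_smul_iff, eq_comm]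
    have hsum : a = ∑' h : G, μ h * ν {h⁻¹ • q} := by
      rw [← hq, hstq]
      exact tsum_congr fun h => by rw [hpre h]
    have hlt2 : ∑' h : G, μ h * ν {h⁻¹ • q} < ∑' h : G, μ h * a := by
      refine ENNReal.tsum_lt_tsum (i := g) ?_ ?_ ?_
      · rw [← hsum]; exact hane
      · exact fun h => mul_le_mul_right (hmax _) _
      · have hgle : μ g ≤ 1 := hμ1 ▸ ENNReal.le_tsum g
        exact (ENNReal.mul_lt_mul_iff_right hg.ne'
          (lt_of_le_of_lt hgle ENNReal.one_lt_top).ne).mpr hlt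
    rw [ENNReal.tsum_mul_right, hμ1, one_mul, ← hsum] at hlt2
    exact lt_irrefl a hlt2
  -- the set of g preserving maximality is a subsemigroup containing the support
  set T : Subsemigroup G :=
    { carrier := {g : G | ∀ q : α, ν {q} = a → ν {g⁻¹ • q} = a}
      mul_mem' := by
        intro g h hgT hhT q hq
        have : (g * h)⁻¹ • q = h⁻¹ • (g⁻¹ • q) := by
          rw [mul_inv_rev, mul_smul]
        rw [this]
        exact hhT _ (hgT q hq) } with hT
  have hsub : {g : G | 0 < μ g} ⊆ (T : Set G) := fun g hg q hq => key q hq g hg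
  have hTtop : ∀ g : G, g ∈ T := by
    have := Subsemigroup.closure_le.mpr hsub
    rw [hgen] at this
    exact fun g => this (Subsemigroup.mem_top g)
  -- all points of the orbit of p have mass a
  have horb : ∀ y ∈ MulAction.orbit G p, ν {y} = a := by
    rintro y ⟨g, rfl⟩
    have := hTtop g⁻¹ p rfl
    simpa using this
  exact count (MulAction.orbit G p) (fun y hy => (horb y hy) ▸ hba) (horbit p)
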